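/- Under the power asymmetry specification, for every bidder i and every real w, the joint probability that the winning bid is at most w and bidder i wins equals F(w)^{Λ_{N|i}} − (Λ_{N|i}/Λ_N) · F(w)^{Λ_N}; that is, P(max_{j≠i} V_j ≤ min(w, V_i)) = F(w)^{Λ_{N|i}} − (Λ_{N|i}/Λ_N) F(w)^{Λ_N}. -/

import Mathlib

open MeasureTheory ProbabilityTheory Set Filter

noncomputable def powLaw (a : ℝ) : Measure ℝ :=
  (volume.restrict (Set.Ioc 0 1)).withDensity fun u => ENNReal.ofReal (a * u ^ (a-1))


lemma lint_pow (a : ℝ) (ha : 0 < a) (c : ℝ) (hc0 : 0 ≤ c) :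
    ∫⁻ u in Set.Ioc 0 c, ENNReal.ofReal (a * u ^ (a-1)) = ENNReal.ofReal (c ^ a) := by
  have hint : IntervalIntegrable (fun u : ℝ => a * u ^ (a-1)) volume 0 c :=
    (intervalIntegral.intervalIntegrable_rpow' (by linarith)).const_mul a
  have hIoc : IntegrableOn (fun u : ℝ => a * u ^ (a-1)) (Set.Ioc 0 c) volume := by
    rw [← intervalIntegrable_iff_integrableOn_Ioc_of_le hc0]; exact hint
  rw [← ofReal_integral_eq_lintegral_ofReal hIoc]
  · rw [← intervalIntegral.integral_of_le hc0,
      intervalIntegral.integral_const_mul, integral_rpow (Or.inl (by linarith))]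
    congr 1
    rw [Real.zero_rpow (by linarith : a - 1 + 1 ≠ 0), sub_add_cancel]
    field_simp
    simp
  · filter_upwards [ae_restrict_mem measurableSet_Ioc] with u hu
    have : (0:ℝ) ≤ u ^ (a-1) := Real.rpow_nonneg hu.1.le _
    positivity

lemma powLaw_apply (a : ℝ) (s : Set ℝ) (hs : MeasurableSet s) :
    powLaw a s = ∫⁻ u in Set.Ioc 0 1 ∩ s, ENNReal.ofReal (a * u ^ (a-1)) := by
  rw [powLaw, withDensity_apply _ hs, Measure.restrict_restrict hs, Set.inter_comm]

lemma powLaw_Iic_of_nonneg (a : ℝ) (ha : 0 < a) (u : ℝ) (hu : 0 ≤ u) :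
    powLaw a (Set.Iic u) = ENNReal.ofReal (min u 1 ^ a) := by
  rw [powLaw_apply _ _ measurableSet_Iic]
  have : Set.Ioc (0:ℝ) 1 ∩ Set.Iic u = Set.Ioc 0 (min u 1) := by
    ext x; simp [Set.mem_Ioc, Set.mem_Iic, and_comm, and_assoc, min_comm u 1]
  rw [this, lint_pow a ha _ (le_min hu zero_le_one)]

lemma powLaw_Iic_of_neg (a : ℝ) (u : ℝ) (hu : u < 0) :
    powLaw a (Set.Iic u) = 0 := by
  rw [powLaw_apply _ _ measurableSet_Iic]
  have : Set.Ioc (0:ℝ) 1 ∩ Set.Iic u = ∅ := by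
    ext x; simp only [Set.mem_inter_iff, Set.mem_Ioc, Set.mem_Iic, Set.mem_empty_iff_false,
      iff_false]
    rintro ⟨⟨h1, _⟩, h2⟩; linarith
  rw [this]
  simp

lemma powLaw_finite (a : ℝ) (ha : 0 < a) : IsFiniteMeasure (powLaw a) := by
  constructor
  rw [powLaw, withDensity_apply _ MeasurableSet.univ, Measure.restrict_restrict MeasurableSet.univ,
    Set.univ_inter]
  rw [lint_pow a ha 1 zero_le_one]
  exact ENNReal.ofReal_lt_top

lemma aux_int (a b c : ℝ) (ha : 0 < a) (hb : 0 < b) (hc0 : 0 ≤ c) (hc1 : c ≤ 1) :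
    ∫⁻ u in Set.Ioc 0 1, ENNReal.ofReal (min c u ^ b * (a * u ^ (a-1)))
      = ENNReal.ofReal (c ^ b - b/(a+b) * c ^ (a+b)) := by
  set f : ℝ → ℝ := fun u => min c u ^ b * (a * u ^ (a-1)) with hf
  have hab : (0:ℝ) < a + b := by linarith
  have heq1 : EqOn f (fun u => a * u ^ (a+b-1)) (Set.Ioc 0 c) := by
    intro u hu
    simp only [hf, min_eq_right hu.2]
    rw [show a + b - 1 = b + (a-1) by ring, Real.rpow_add hu.1]
    ring
  have heq2 : EqOn f (fun u => c ^ b * (a * u ^ (a-1))) (Set.Ioc c 1) := by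
    intro u hu
    simp only [hf, min_eq_left hu.1.le]
  have hi1 : IntegrableOn (fun u : ℝ => a * u ^ (a+b-1)) (Set.Ioc 0 c) volume := by
    rw [← intervalIntegrable_iff_integrableOn_Ioc_of_le hc0]
    exact (intervalIntegral.intervalIntegrable_rpow' (by linarith)).const_mul a
  have hi2 : IntegrableOn (fun u : ℝ => c ^ b * (a * u ^ (a-1))) (Set.Ioc c 1) volume := by
    rw [← intervalIntegrable_iff_integrableOn_Ioc_of_le hc1]
    exact ((intervalIntegral.intervalIntegrable_rpow' (by linarith)).const_mul a).const_mul _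
  have hfi1 : IntegrableOn f (Set.Ioc 0 c) volume := hi1.congr_fun heq1.symm measurableSet_Ioc
  have hfi2 : IntegrableOn f (Set.Ioc c 1) volume := hi2.congr_fun heq2.symm measurableSet_Ioc
  have hsplit : Set.Ioc (0:ℝ) 1 = Set.Ioc 0 c ∪ Set.Ioc c 1 := (Set.Ioc_union_Ioc_eq_Ioc hc0 hc1).symm
  have hfi : IntegrableOn f (Set.Ioc 0 1) volume := by
    rw [hsplit]; exact hfi1.union hfi2
  have hnn : 0 ≤ᵐ[volume.restrict (Set.Ioc (0:ℝ) 1)] f := by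
    filter_upwards [ae_restrict_mem measurableSet_Ioc] with u hu
    have h1 : (0:ℝ) ≤ min c u := le_min hc0 hu.1.le
    have h2 : (0:ℝ) ≤ min c u ^ b := Real.rpow_nonneg h1 _
    have h3 : (0:ℝ) ≤ u ^ (a-1) := Real.rpow_nonneg hu.1.le _
    positivity
  rw [← ofReal_integral_eq_lintegral_ofReal hfi hnn]
  congr 1
  rw [hsplit, setIntegral_union (Set.Ioc_disjoint_Ioc_of_le le_rfl) measurableSet_Ioc hfi1 hfi2,
    setIntegral_congr_fun measurableSet_Ioc heq1, setIntegral_congr_fun measurableSet_Ioc heq2]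
  have e1 : ∫ u in Set.Ioc (0:ℝ) c, a * u ^ (a+b-1) = a/(a+b) * c ^ (a+b) := by
    rw [← intervalIntegral.integral_of_le hc0, intervalIntegral.integral_const_mul,
      integral_rpow (Or.inl (by linarith))]
    rw [Real.zero_rpow (by linarith : a + b - 1 + 1 ≠ 0), sub_add_cancel]
    field_simp
    simp
  have e2 : ∫ u in Set.Ioc c 1, c ^ b * (a * u ^ (a-1)) = c ^ b * (1 - c ^ a) := by
    rw [← intervalIntegral.integral_of_le hc1, intervalIntegral.integral_const_mul,
      intervalIntegral.integral_const_mul, integral_rpow (Or.inl (by linarith))]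
    rw [sub_add_cancel, Real.one_rpow]
    field_simp
  rw [e1, e2]
  have e3 : c ^ b * c ^ a = c ^ (a+b) := by
    rw [Real.rpow_add' hc0 (by linarith : a + b ≠ 0)]; ring
  have : c ^ b * (1 - c ^ a) = c ^ b - c ^ (a+b) := by rw [mul_sub, mul_one, e3]
  rw [this]
  field_simp
  ring


lemma map_F_eq_powLaw (F : ℝ → ℝ) (hFmono : Monotone F) (hFcont : Continuous F)
    (hF0 : Tendsto F atBot (nhds 0)) (hF1 : Tendsto F atTop (nhds 1))
    (hFnn : ∀ x, 0 ≤ F x) (hFle : ∀ x, F x ≤ 1)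
    (a : ℝ) (ha : 0 < a) (ν : Measure ℝ) [IsProbabilityMeasure ν]
    (hcdf : ∀ v, ν (Set.Iic v) = ENNReal.ofReal (F v ^ a)) :
    ν.map F = powLaw a := by
  haveI := powLaw_finite a ha
  haveI : IsProbabilityMeasure (ν.map F) :=
    Measure.isProbabilityMeasure_map hFcont.measurable.aemeasurable
  refine MeasureTheory.Measure.ext_of_Iic (ν.map F) (powLaw a) (fun u => ?_)
  rw [Measure.map_apply hFcont.measurable measurableSet_Iic]
  rcases lt_or_ge u 0 with hu | hu
  · rw [powLaw_Iic_of_neg a u hu]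
    have : F ⁻¹' Set.Iic u = ∅ := by
      ext x; simp only [Set.mem_preimage, Set.mem_Iic, Set.mem_empty_iff_false, iff_false, not_le]
      exact lt_of_lt_of_le hu (hFnn x)
    simp [this]
  rcases le_or_gt 1 u with hu1 | hu1
  · rw [powLaw_Iic_of_nonneg a ha u hu, min_eq_right hu1, Real.one_rpow, ENNReal.ofReal_one]
    have : F ⁻¹' Set.Iic u = Set.univ := by
      ext x; simp only [Set.mem_preimage, Set.mem_Iic, Set.mem_univ, iff_true]
      exact le_trans (hFle x) hu1
    rw [this]; exact measure_univ
  · -- 0 ≤ u < 1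
    rw [powLaw_Iic_of_nonneg a ha u hu, min_eq_left hu1.le]
    set S : Set ℝ := F ⁻¹' Set.Iic u with hS
    have hSclosed : IsClosed S := isClosed_Iic.preimage hFcont
    have hSbdd : BddAbove S := by
      obtain ⟨M, hM⟩ := (hF1.eventually (eventually_gt_nhds hu1)).exists_forall_of_atTop
      refine ⟨M, fun x hx => ?_⟩
      by_contra hxM
      exact absurd (hM x (le_of_not_ge hxM)) (not_lt.2 hx)
    rcases eq_empty_or_nonempty S with hSe | hSne
    · -- S empty implies u = 0
      have hu0 : u = 0 := by
        by_contra h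
        have hu' : 0 < u := lt_of_le_of_ne hu (Ne.symm h)
        obtain ⟨x, hx⟩ := (hF0.eventually (eventually_lt_nhds hu')).exists
        exact absurd (show x ∈ S from hx.le) (by simp [hSe])
      rw [hSe, hu0, Real.zero_rpow ha.ne']
      simp
    · set s := sSup S with hsdef
      have hsS : s ∈ S := hSclosed.csSup_mem hSne hSbdd
      have hSIic : S = Set.Iic s := by
        ext x
        constructor
        · exact fun hx => le_csSup hSbdd hx
        · intro hx
          exact le_trans (hFmono hx) hsS
      have hFs : F s = u := by
        refine le_antisymm hsS ?_
        by_contra h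
        push_neg at h
        have hopen : IsOpen {x : ℝ | F x < u} := isOpen_lt hFcont continuous_const
        obtain ⟨ε, hε, hball⟩ := Metric.mem_nhds_iff.mp (hopen.mem_nhds h)
        have hmem : s + ε/2 ∈ {x : ℝ | F x < u} := by
          apply hball
          rw [Metric.mem_ball, Real.dist_eq, abs_of_pos (by linarith)]
          linarith
        have hmem' : F (s + ε/2) < u := hmem
        have : s + ε/2 ≤ s := le_csSup hSbdd (show s + ε/2 ∈ S from le_of_lt hmem')
        linarith
      rw [hSIic, hcdf s, hFs]


lemma key_int (F : ℝ → ℝ) (hFmono : Monotone F) (hFcont : Continuous F)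
    (hF0 : Tendsto F atBot (nhds 0)) (hF1 : Tendsto F atTop (nhds 1))
    (hFnn : ∀ x, 0 ≤ F x) (hFle : ∀ x, F x ≤ 1)
    (a b : ℝ) (ha : 0 < a) (hb : 0 < b) (ν : Measure ℝ) [IsProbabilityMeasure ν]
    (hcdf : ∀ v, ν (Set.Iic v) = ENNReal.ofReal (F v ^ a)) (w : ℝ) :
    ∫⁻ x, ENNReal.ofReal (F (min w x) ^ b) ∂ν
      = ENNReal.ofReal (F w ^ b - b/(a+b) * F w ^ (a+b)) := by
  set c : ℝ := F w with hc
  have hc0 : 0 ≤ c := hFnn w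
  have hc1 : c ≤ 1 := hFle w
  have hmin : ∀ x, F (min w x) = min c (F x) := by
    intro x
    rcases le_total x w with h | h
    · rw [min_eq_right h, min_eq_right (hFmono h)]
    · rw [min_eq_left h, min_eq_left (hFmono h)]
  have hpow : Measurable (fun x : ℝ => x ^ b) := by measurability
  have hg : Measurable (fun u : ℝ => ENNReal.ofReal (min c u ^ b)) :=
    ENNReal.measurable_ofReal.comp (hpow.comp (measurable_const.min measurable_id))
  have hd : Measurable (fun u : ℝ => ENNReal.ofReal (a * u ^ (a-1))) := by measurability
  calc ∫⁻ x, ENNReal.ofReal (F (min w x) ^ b) ∂ν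
      = ∫⁻ x, ENNReal.ofReal (min c (F x) ^ b) ∂ν := by
        exact lintegral_congr fun x => by rw [hmin x]
    _ = ∫⁻ u, ENNReal.ofReal (min c u ^ b) ∂(ν.map F) :=
        (lintegral_map hg hFcont.measurable).symm
    _ = ∫⁻ u, ENNReal.ofReal (min c u ^ b) ∂(powLaw a) := by
        rw [map_F_eq_powLaw F hFmono hFcont hF0 hF1 hFnn hFle a ha ν hcdf]
    _ = ∫⁻ u in Set.Ioc 0 1,
          ((fun u => ENNReal.ofReal (a * u ^ (a-1))) * fun u => ENNReal.ofReal (min c u ^ b)) u := by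
        rw [powLaw, lintegral_withDensity_eq_lintegral_mul _ hd hg]
    _ = ∫⁻ u in Set.Ioc 0 1, ENNReal.ofReal (min c u ^ b * (a * u ^ (a-1))) := by
        refine lintegral_congr_ae ?_
        filter_upwards [ae_restrict_mem measurableSet_Ioc] with u hu
        simp only [Pi.mul_apply]
        have hnn : (0:ℝ) ≤ u ^ (a-1) := Real.rpow_nonneg hu.1.le _
        rw [← ENNReal.ofReal_mul (by positivity : (0:ℝ) ≤ a * u ^ (a-1))]
        ring_nf
    _ = ENNReal.ofReal (c ^ b - b/(a+b) * c ^ (a+b)) := aux_int a b c ha hb hc0 hc1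



/-- Under the power asymmetry specification, for every bidder `i`
and every real `w`, the joint probability that the winning bid is at most `w` and
bidder `i` wins equals `F(w)^{Λ_{N|i}} − (Λ_{N|i}/Λ_N) · F(w)^{Λ_N}`, where
`Λ_N = λ_1 + ⋯ + λ_N` and `Λ_{N|i} = Λ_N − λ_i`. -/
theorem joint_winningBid_winner_cdf_power_asymmetry
    {Ω : Type*} [MeasurableSpace Ω] (μ : Measure Ω) [IsProbabilityMeasure μ]
    (N : ℕ) (hN : 2 ≤ N) (l : Fin N → ℝ) (hl : ∀ i, 0 < l i)
    (F : ℝ → ℝ) (hFmono : Monotone F) (hFcont : Continuous F)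
    (hF0 : Filter.Tendsto F Filter.atBot (nhds 0))
    (hF1 : Filter.Tendsto F Filter.atTop (nhds 1))
    (V : Fin N → Ω → ℝ) (hVmeas : ∀ i, Measurable (V i))
    (hindep : iIndepFun V μ)
    (hcdf : ∀ i v, μ {ω | V i ω ≤ v} = ENNReal.ofReal ((F v) ^ (l i))) :
    ∀ i, ∀ w : ℝ,
      (μ {ω | ∀ j, j ≠ i → V j ω ≤ min w (V i ω)}).toReal
        = (F w) ^ ((∑ j, l j) - l i)
          - (((∑ j, l j) - l i) / (∑ j, l j)) * (F w) ^ (∑ j, l j) := by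
  classical
  intro i w
  have hFnn : ∀ x, 0 ≤ F x := fun x =>
    le_of_tendsto hF0 (Filter.eventually_atBot.2 ⟨x, fun y hy => hFmono hy⟩)
  have hFle : ∀ x, F x ≤ 1 := fun x =>
    ge_of_tendsto hF1 (Filter.eventually_atTop.2 ⟨x, fun y hy => hFmono hy⟩)
  set Λ : ℝ := ∑ j, l j with hΛ
  set S : Finset (Fin N) := Finset.univ.erase i with hSdef
  have hSne : S.Nonempty := by
    apply Finset.card_pos.mp
    rw [hSdef, Finset.card_erase_of_mem (Finset.mem_univ i), Finset.card_univ, Fintype.card_fin]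
    omega
  set a : ℝ := l i with hadef
  set b : ℝ := ∑ j ∈ S, l j with hbdef
  have ha : 0 < a := hl i
  have hb : 0 < b := Finset.sum_pos (fun j _ => hl j) hSne
  have hbsum : b = Λ - a := by
    rw [hbdef, hSdef, Finset.sum_erase_eq_sub (Finset.mem_univ i)]
  -- the tuple of losers
  set T : Ω → (S → ℝ) := fun ω (j : S) => V j ω with hTdef
  have hT : Measurable T := measurable_pi_lambda _ fun j => hVmeas j
  have hpair : Measurable (fun ω => (V i ω, T ω)) := (hVmeas i).prodMk hT
  set s0 : Set (ℝ × (S → ℝ)) := {p | ∀ j : S, p.2 j ≤ min w p.1} with hs0def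
  have hs0 : MeasurableSet s0 := by
    have : s0 = ⋂ j : S, {p : ℝ × (S → ℝ) | p.2 j ≤ min w p.1} := by
      ext p; simp [hs0def, Set.mem_iInter]
    rw [this]
    exact MeasurableSet.iInter fun j =>
      measurableSet_le (by fun_prop) (by fun_prop)
  have hevent : {ω | ∀ j, j ≠ i → V j ω ≤ min w (V i ω)} = (fun ω => (V i ω, T ω)) ⁻¹' s0 := by
    ext ω
    simp only [Set.mem_setOf_eq, Set.mem_preimage, hs0def, hTdef, Subtype.forall]
    constructor
    · intro h j hj
      exact h j (Finset.ne_of_mem_erase hj)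
    · intro h j hj
      exact h j (by simp [hSdef, hj])
  have hdisj : Disjoint ({i} : Finset (Fin N)) S := by
    simp [hSdef, Finset.disjoint_singleton_left]
  have hIndep : IndepFun (V i) T μ := by
    have h1 := hindep.indepFun_finset {i} S hdisj hVmeas
    have h2 := h1.comp (φ := fun v : (({i} : Finset (Fin N)) → ℝ) => v ⟨i, Finset.mem_singleton_self i⟩)
      (ψ := id) (measurable_pi_apply _ : Measurable fun v : (({i} : Finset (Fin N)) → ℝ) => v ⟨i, Finset.mem_singleton_self i⟩) measurable_id
    exact h2
  have hmap : μ.map (fun ω => (V i ω, T ω)) = (μ.map (V i)).prod (μ.map T) :=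
    (indepFun_iff_map_prod_eq_prod_map_map (hVmeas i).aemeasurable hT.aemeasurable).mp hIndep
  haveI : IsProbabilityMeasure (μ.map T) := Measure.isProbabilityMeasure_map hT.aemeasurable
  haveI : IsProbabilityMeasure (μ.map (V i)) := Measure.isProbabilityMeasure_map (hVmeas i).aemeasurable
  have hslice : ∀ x : ℝ, (μ.map T) (Prod.mk x ⁻¹' s0) = ENNReal.ofReal (F (min w x) ^ b) := by
    intro x
    have hsl : Prod.mk x ⁻¹' s0 = ⋂ j : S, (fun v : S → ℝ => v j) ⁻¹' Set.Iic (min w x) := by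
      ext v; simp [hs0def, Set.mem_iInter]
    have hslm : MeasurableSet (Prod.mk x ⁻¹' s0) := by
      rw [hsl]
      exact MeasurableSet.iInter fun j => (measurable_pi_apply j) measurableSet_Iic
    rw [Measure.map_apply hT hslm]
    have hpre : T ⁻¹' (Prod.mk x ⁻¹' s0) = ⋂ j ∈ S, V j ⁻¹' Set.Iic (min w x) := by
      rw [hsl]
      ext ω
      simp [hTdef, Set.mem_iInter, Subtype.forall]
    rw [hpre, hindep.measure_inter_preimage_eq_mul S (sets := fun _ => Set.Iic (min w x))
      (fun j _ => measurableSet_Iic)]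
    have hfac : ∀ j, μ (V j ⁻¹' Set.Iic (min w x)) = ENNReal.ofReal (F (min w x) ^ l j) :=
      fun j => hcdf j (min w x)
    rw [Finset.prod_congr rfl (fun j _ => hfac j),
      ← ENNReal.ofReal_prod_of_nonneg (fun j _ => Real.rpow_nonneg (hFnn _) _),
      ← Real.rpow_sum_of_nonneg (hFnn _) (fun j _ => (hl j).le)]
  have hcdfν : ∀ v, (μ.map (V i)) (Set.Iic v) = ENNReal.ofReal (F v ^ a) := by
    intro v
    rw [Measure.map_apply (hVmeas i) measurableSet_Iic]
    exact hcdf i v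
  have hmain : μ {ω | ∀ j, j ≠ i → V j ω ≤ min w (V i ω)}
      = ENNReal.ofReal (F w ^ b - b/(a+b) * F w ^ (a+b)) := by
    rw [hevent, ← Measure.map_apply hpair hs0, hmap, Measure.prod_apply hs0]
    calc ∫⁻ x, (μ.map T) (Prod.mk x ⁻¹' s0) ∂(μ.map (V i))
        = ∫⁻ x, ENNReal.ofReal (F (min w x) ^ b) ∂(μ.map (V i)) := by
          exact lintegral_congr fun x => hslice x
      _ = ENNReal.ofReal (F w ^ b - b/(a+b) * F w ^ (a+b)) :=
          key_int F hFmono hFcont hF0 hF1 hFnn hFle a b ha hb _ hcdfν w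
  rw [hmain, ENNReal.toReal_ofReal]
  · have hab : a + b = Λ := by rw [hbsum]; ring
    rw [hab, hbsum]
  · -- nonnegativity
    have h1 : F w ^ (a+b) ≤ F w ^ b := by
      rcases eq_or_lt_of_le (hFnn w) with h | h
      · rw [← h, Real.zero_rpow hb.ne', Real.zero_rpow (by linarith : a + b ≠ 0)]
      · exact Real.rpow_le_rpow_of_exponent_ge h (hFle w) (by linarith)
    have h2 : b/(a+b) ≤ 1 := by
      rw [div_le_one (by linarith)]; linarith
    have h3 : 0 ≤ F w ^ (a+b) := Real.rpow_nonneg (hFnn w) _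
    nlinarith
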